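/- Relative size of pass-through vector components (Proposition 8, corrected orientation consistent with Equation (4.1) of the paper). For any two indices ℓ, ℓ' ∈ {1, …, d}, the pass-through rates satisfy ρ̃_{T_ℓ}·(τ_{T_{ℓ'}} − ν_{T_{ℓ'}}·η·θ) = ρ̃_{T_{ℓ'}}·(τ_{T_ℓ} − ν_{T_ℓ}·η·θ), and, whenever f_{T_ℓ} ≠ 0 and f_{T_{ℓ'}} ≠ 0, the pass-through quasi-elasticities satisfy ρ_{T_ℓ}·f_{T_ℓ}·(τ_{T_{ℓ'}} − ν_{T_{ℓ'}}·η·θ) = ρ_{T_{ℓ'}}·f_{T_{ℓ'}}·(τ_{T_ℓ} − ν_{T_ℓ}·η·θ), where η, θ, and all sensitivities are evaluated at the equilibrium point (p(q*(T₀)), q*(T₀), T₀). -/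

import Mathlib

set_option maxHeartbeats 1000000 in
/-- **Proposition 8 (Relative size of pass-through vector components).** -/
theorem relative_size_of_pass_through_components
    -- inverse industry demand, twice differentiable, positive and decreasing on q > 0
    (d : ℕ)
    (p p' p'' : ℝ → ℝ)
    (hp : ∀ q : ℝ, HasDerivAt p (p' q) q)
    (hp' : ∀ q : ℝ, HasDerivAt p' (p'' q) q)
    (hppos : ∀ q : ℝ, 0 < q → 0 < p q)
    (hpneg : ∀ q : ℝ, 0 < q → p' q < 0)
    -- cost function, twice differentiable, marginal cost mc = c'
    (c mc mc' : ℝ → ℝ)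
    (hc : ∀ q : ℝ, HasDerivAt c (mc q) q)
    (hmc : ∀ q : ℝ, HasDerivAt mc (mc' q) q)
    -- conduct index
    (θ : ℝ → ℝ) (hθ : Differentiable ℝ θ)
    -- tax function φ(p, q, T), twice continuously differentiable
    (φ : ℝ → ℝ → (Fin d → ℝ) → ℝ)
    (hφ : ContDiff ℝ 2 (fun x : ℝ × ℝ × (Fin d → ℝ) => φ x.1 x.2.1 x.2.2))
    -- first-order price and quantity sensitivities of the tax revenue
    (ν τf : ℝ → ℝ → (Fin d → ℝ) → ℝ)
    (hν : ∀ (a b : ℝ) (T : Fin d → ℝ), ν a b T = (1 / b) * deriv (fun x => φ x b T) a)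
    (hτf : ∀ (a b : ℝ) (T : Fin d → ℝ), τf a b T = (1 / a) * deriv (fun x => φ a x T) b)
    -- symmetric equilibrium on an open neighborhood of T₀
    (T₀ : Fin d → ℝ) (qs : (Fin d → ℝ) → ℝ)
    (U : Set (Fin d → ℝ)) (hU : IsOpen U) (hT₀ : T₀ ∈ U)
    (hqs : ContDiffOn ℝ 1 qs U)
    (hqpos : ∀ T ∈ U, 0 < qs T)
    (hFOC : ∀ T ∈ U,
      (1 - τf (p (qs T)) (qs T) T
          - (1 - ν (p (qs T)) (qs T) T) * (-(qs T) * p' (qs T) / p (qs T)) * θ (qs T))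
        * p (qs T) = mc (qs T))
    -- equilibrium values
    (q0 p0 η0 ε0 θ0 ν0 τ0 : ℝ)
    (hq0 : q0 = qs T₀) (hp0 : p0 = p q0)
    (hη0 : η0 = -q0 * p' q0 / p q0) (hε0 : ε0 = 1 / η0)
    (hθ0 : θ0 = θ q0) (hν0 : ν0 = ν p0 q0 T₀) (hτ0 : τ0 = τf p0 q0 T₀)
    -- pass-through rate vector and tax-instrument derivatives of φ, τ, ν
    (ρvec fvec τvec νvec : Fin d → ℝ)
    (hρvec : ∀ ℓ : Fin d,
      ρvec ℓ = deriv (fun s => p (qs (Function.update T₀ ℓ s))) (T₀ ℓ))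
    (hfvec : ∀ ℓ : Fin d,
      fvec ℓ = (1 / q0) * deriv (fun s => φ p0 q0 (Function.update T₀ ℓ s)) (T₀ ℓ))
    (hτvec : ∀ ℓ : Fin d,
      τvec ℓ = deriv (fun s => τf p0 q0 (Function.update T₀ ℓ s)) (T₀ ℓ))
    (hνvec : ∀ ℓ : Fin d,
      νvec ℓ = deriv (fun s => ν p0 q0 (Function.update T₀ ℓ s)) (T₀ ℓ))
    :
    -- pass-through rates
    (∀ ℓ ℓ' : Fin d,
      ρvec ℓ * (τvec ℓ' - νvec ℓ' * η0 * θ0)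
        = ρvec ℓ' * (τvec ℓ - νvec ℓ * η0 * θ0))
    -- pass-through quasi-elasticities ρ_{T_ℓ} = ρ̃_{T_ℓ}/f_{T_ℓ}
    ∧ (∀ ℓ ℓ' : Fin d, fvec ℓ ≠ 0 → fvec ℓ' ≠ 0 →
      (ρvec ℓ / fvec ℓ) * fvec ℓ * (τvec ℓ' - νvec ℓ' * η0 * θ0)
        = (ρvec ℓ' / fvec ℓ') * fvec ℓ' * (τvec ℓ - νvec ℓ * η0 * θ0)) := by
  classical
  -- basic positivity
  have hq0pos : 0 < q0 := hq0 ▸ hqpos T₀ hT₀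
  have hp0pos : 0 < p0 := hp0 ▸ hppos q0 hq0pos
  have hq0ne : q0 ≠ 0 := ne_of_gt hq0pos
  have hp0ne : p0 ≠ 0 := ne_of_gt hp0pos
  have hp'ne : p' q0 ≠ 0 := ne_of_lt (hpneg q0 hq0pos)
  have hpdiff : Differentiable ℝ p := fun x => (hp x).differentiableAt
  have hp'diff : Differentiable ℝ p' := fun x => (hp' x).differentiableAt
  have hmcdiff : Differentiable ℝ mc := fun x => (hmc x).differentiableAt
  -- ψ and its directional derivatives
  set ψ : ℝ × ℝ × (Fin d → ℝ) → ℝ := fun x => φ x.1 x.2.1 x.2.2 with hψdef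
  have hψ2 : ContDiff ℝ 2 ψ := hφ
  have hψdiff : Differentiable ℝ ψ := hψ2.differentiable (by norm_num)
  have hfd : ContDiff ℝ 1 (fderiv ℝ ψ) := hψ2.fderiv_right (by norm_num)
  set D1 : ℝ × ℝ × (Fin d → ℝ) → ℝ :=
    fun x => fderiv ℝ ψ x ((1 : ℝ), (0 : ℝ), (0 : Fin d → ℝ)) with hD1def
  set D2 : ℝ × ℝ × (Fin d → ℝ) → ℝ :=
    fun x => fderiv ℝ ψ x ((0 : ℝ), (1 : ℝ), (0 : Fin d → ℝ)) with hD2def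
  have hD1diff : Differentiable ℝ D1 := fun x =>
    (hfd.differentiable one_ne_zero x).clm_apply (differentiableAt_const _)
  have hD2diff : Differentiable ℝ D2 := fun x =>
    (hfd.differentiable one_ne_zero x).clm_apply (differentiableAt_const _)
  -- slice derivatives of φ equal directional derivatives of ψ
  have hslice1 : ∀ (a b : ℝ) (T : Fin d → ℝ),
      HasDerivAt (fun x => φ x b T) (D1 (a, b, T)) a := by
    intro a b T
    have hj : HasDerivAt (fun x : ℝ => ((x, b, T) : ℝ × ℝ × (Fin d → ℝ)))
        ((1 : ℝ), (0 : ℝ), (0 : Fin d → ℝ)) a :=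
      (hasDerivAt_id a).prodMk ((hasDerivAt_const a b).prodMk (hasDerivAt_const a T))
    exact (hψdiff (a, b, T)).hasFDerivAt.comp_hasDerivAt a hj
  have hslice2 : ∀ (a b : ℝ) (T : Fin d → ℝ),
      HasDerivAt (fun x => φ a x T) (D2 (a, b, T)) b := by
    intro a b T
    have hj : HasDerivAt (fun x : ℝ => ((a, x, T) : ℝ × ℝ × (Fin d → ℝ)))
        ((0 : ℝ), (1 : ℝ), (0 : Fin d → ℝ)) b :=
      (hasDerivAt_const b a).prodMk ((hasDerivAt_id b).prodMk (hasDerivAt_const b T))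
    exact (hψdiff (a, b, T)).hasFDerivAt.comp_hasDerivAt b hj
  have hτ'eq : ∀ (a b : ℝ) (T : Fin d → ℝ), τf a b T = (1 / a) * D2 (a, b, T) := by
    intro a b T; rw [hτf, (hslice2 a b T).deriv]
  have hν'eq : ∀ (a b : ℝ) (T : Fin d → ℝ), ν a b T = (1 / b) * D1 (a, b, T) := by
    intro a b T; rw [hν, (hslice1 a b T).deriv]
  -- the FOC function H on (q, T) space
  set H : ℝ × (Fin d → ℝ) → ℝ := fun z =>
    (1 - (1 / p z.1) * D2 (p z.1, z.1, z.2)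
       - (1 - (1 / z.1) * D1 (p z.1, z.1, z.2)) * (-z.1 * p' z.1 / p z.1) * θ z.1) * p z.1
      - mc z.1 with hHdef
  have hHτν : ∀ (q : ℝ) (T : Fin d → ℝ), H (q, T) =
      (1 - τf (p q) q T - (1 - ν (p q) q T) * (-q * p' q / p q) * θ q) * p q - mc q := by
    intro q T
    rw [hτ'eq, hν'eq]
  have hHzero : ∀ T ∈ U, H (qs T, T) = 0 := by
    intro T hT
    rw [hHτν, hFOC T hT, sub_self]
  -- differentiability of H at z0 = (q0, T₀)
  have hpq0 : p q0 ≠ 0 := hp0 ▸ hp0ne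
  have hpz1 : DifferentiableAt ℝ (fun z : ℝ × (Fin d → ℝ) => p z.1) (q0, T₀) :=
    DifferentiableAt.comp (q0, T₀) (hpdiff q0) differentiableAt_fst
  have hp'z1 : DifferentiableAt ℝ (fun z : ℝ × (Fin d → ℝ) => p' z.1) (q0, T₀) :=
    DifferentiableAt.comp (q0, T₀) (hp'diff q0) differentiableAt_fst
  have hmcz1 : DifferentiableAt ℝ (fun z : ℝ × (Fin d → ℝ) => mc z.1) (q0, T₀) :=
    DifferentiableAt.comp (q0, T₀) (hmcdiff q0) differentiableAt_fst
  have hθz1 : DifferentiableAt ℝ (fun z : ℝ × (Fin d → ℝ) => θ z.1) (q0, T₀) :=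
    DifferentiableAt.comp (q0, T₀) (hθ q0) differentiableAt_fst
  have hM : DifferentiableAt ℝ
      (fun z : ℝ × (Fin d → ℝ) => ((p z.1, z.1, z.2) : ℝ × ℝ × (Fin d → ℝ))) (q0, T₀) :=
    hpz1.prodMk (differentiableAt_fst.prodMk differentiableAt_snd)
  have hD1M : DifferentiableAt ℝ (fun z : ℝ × (Fin d → ℝ) => D1 (p z.1, z.1, z.2)) (q0, T₀) :=
    DifferentiableAt.comp (q0, T₀) (hD1diff _) hM
  have hD2M : DifferentiableAt ℝ (fun z : ℝ × (Fin d → ℝ) => D2 (p z.1, z.1, z.2)) (q0, T₀) :=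
    DifferentiableAt.comp (q0, T₀) (hD2diff _) hM
  have hpq0' : (fun z : ℝ × (Fin d → ℝ) => p z.1) (q0, T₀) ≠ 0 := hpq0
  have hfst0 : (fun z : ℝ × (Fin d → ℝ) => z.1) (q0, T₀) ≠ 0 := hq0ne
  have hfstA : DifferentiableAt ℝ (fun z : ℝ × (Fin d → ℝ) => z.1) (q0, T₀) :=
    differentiableAt_fst
  have hA1 : DifferentiableAt ℝ (fun z : ℝ × (Fin d → ℝ) => 1 / p z.1) (q0, T₀) := by
    simpa [one_div] using hpz1.fun_inv hpq0'
  have hA2 : DifferentiableAt ℝ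
      (fun z : ℝ × (Fin d → ℝ) => 1 / p z.1 * D2 (p z.1, z.1, z.2)) (q0, T₀) := hA1.mul hD2M
  have hA3 : DifferentiableAt ℝ (fun z : ℝ × (Fin d → ℝ) => 1 / z.1) (q0, T₀) := by
    simpa [one_div] using hfstA.fun_inv hfst0
  have hA4 : DifferentiableAt ℝ
      (fun z : ℝ × (Fin d → ℝ) => 1 / z.1 * D1 (p z.1, z.1, z.2)) (q0, T₀) := hA3.mul hD1M
  have hA5 : DifferentiableAt ℝ
      (fun z : ℝ × (Fin d → ℝ) => -z.1 * p' z.1 / p z.1) (q0, T₀) := by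
    simpa [div_eq_mul_inv] using (hfstA.fun_neg.fun_mul hp'z1).fun_mul (hpz1.fun_inv hpq0')
  have hA6 : DifferentiableAt ℝ
      (fun z : ℝ × (Fin d → ℝ) =>
        (1 - 1 / z.1 * D1 (p z.1, z.1, z.2)) * (-z.1 * p' z.1 / p z.1) * θ z.1) (q0, T₀) :=
    (((differentiableAt_const 1).sub hA4).mul hA5).mul hθz1
  have hA7 : DifferentiableAt ℝ
      (fun z : ℝ × (Fin d → ℝ) =>
        1 - 1 / p z.1 * D2 (p z.1, z.1, z.2)
          - (1 - 1 / z.1 * D1 (p z.1, z.1, z.2)) * (-z.1 * p' z.1 / p z.1) * θ z.1) (q0, T₀) :=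
    ((differentiableAt_const 1).sub hA2).sub hA6
  have hHdiffAt : DifferentiableAt ℝ H (q0, T₀) := (hA7.mul hpz1).sub hmcz1
  set L : (ℝ × (Fin d → ℝ)) →L[ℝ] ℝ := fderiv ℝ H (q0, T₀) with hLdef
  have hL : HasFDerivAt H L (q0, T₀) := hHdiffAt.hasFDerivAt
  set G : ℝ := L ((1 : ℝ), (0 : Fin d → ℝ)) with hGdef
  have hqsat : DifferentiableAt ℝ qs T₀ :=
    (hqs.differentiableOn one_ne_zero).differentiableAt (hU.mem_nhds hT₀)
  -- the key identity for each component
  have key : ∀ ℓ : Fin d, G * ρvec ℓ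
      = p' q0 * (p0 * (τvec ℓ - νvec ℓ * η0 * θ0)) := by
    intro ℓ
    set e : Fin d → ℝ := Pi.single ℓ 1 with hedef
    have hg : HasDerivAt (fun s => Function.update T₀ ℓ s) e (T₀ ℓ) := by
      rw [hasDerivAt_pi]
      intro j
      rcases eq_or_ne j ℓ with h | h
      · subst h
        simpa [Function.update_apply, hedef] using (hasDerivAt_id' (x := T₀ j))
      · simpa [Function.update_apply, h, hedef, Pi.single_eq_of_ne h] using
          (hasDerivAt_const (T₀ ℓ) (T₀ j))
    have hupds : Function.update T₀ ℓ (T₀ ℓ) = T₀ := Function.update_eq_self ℓ T₀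
    set Dl : ℝ := fderiv ℝ qs T₀ e with hDldef
    have hqsg : HasDerivAt (fun s => qs (Function.update T₀ ℓ s)) Dl (T₀ ℓ) := by
      have h1 : HasFDerivAt qs (fderiv ℝ qs T₀) (Function.update T₀ ℓ (T₀ ℓ)) := by
        rw [hupds]; exact hqsat.hasFDerivAt
      exact h1.comp_hasDerivAt (T₀ ℓ) hg
    have hcurve : HasDerivAt
        (fun s => ((qs (Function.update T₀ ℓ s), Function.update T₀ ℓ s) : ℝ × (Fin d → ℝ)))
        ((Dl, e)) (T₀ ℓ) := hqsg.prodMk hg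
    have hcomp : HasDerivAt
        (fun s => H (qs (Function.update T₀ ℓ s), Function.update T₀ ℓ s))
        (L (Dl, e)) (T₀ ℓ) := by
      have h1 : HasFDerivAt H L
          ((qs (Function.update T₀ ℓ (T₀ ℓ)), Function.update T₀ ℓ (T₀ ℓ))) := by
        rw [hupds, ← hq0]; exact hL
      exact h1.comp_hasDerivAt (T₀ ℓ) hcurve
    -- the composed function vanishes near T₀ ℓ
    have hmem : ∀ᶠ s in nhds (T₀ ℓ), Function.update T₀ ℓ s ∈ U := by
      have hUfil : U ∈ nhds (Function.update T₀ ℓ (T₀ ℓ)) := by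
        rw [hupds]; exact hU.mem_nhds hT₀
      exact hg.continuousAt hUfil
    have hev : (fun s => H (qs (Function.update T₀ ℓ s), Function.update T₀ ℓ s))
        =ᶠ[nhds (T₀ ℓ)] fun _ => (0 : ℝ) := by
      filter_upwards [hmem] with s hs
      exact hHzero _ hs
    have hder0 : HasDerivAt
        (fun s => H (qs (Function.update T₀ ℓ s), Function.update T₀ ℓ s)) 0 (T₀ ℓ) :=
      (hasDerivAt_const (T₀ ℓ) (0 : ℝ)).congr_of_eventuallyEq hev
    have hLDe : L (Dl, e) = 0 := hcomp.unique hder0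
    -- split L (Dl, e) = Dl * G + L (0, e)
    have hsplit : L (Dl, e) = Dl * G + L ((0 : ℝ), e) := by
      have h1 : ((Dl, e) : ℝ × (Fin d → ℝ))
          = Dl • ((1 : ℝ), (0 : Fin d → ℝ)) + ((0 : ℝ), e) := by
        simp [Prod.ext_iff]
      rw [h1, map_add, map_smul, smul_eq_mul, hGdef]
    -- slice at fixed (q0) : compute L (0, e) explicitly
    have hσL : HasDerivAt (fun s => H (q0, Function.update T₀ ℓ s))
        (L ((0 : ℝ), e)) (T₀ ℓ) := by
      have hcc : HasDerivAt
          (fun s => ((q0, Function.update T₀ ℓ s) : ℝ × (Fin d → ℝ)))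
          (((0 : ℝ), e)) (T₀ ℓ) := (hasDerivAt_const _ q0).prodMk hg
      have h1 : HasFDerivAt H L ((q0, Function.update T₀ ℓ (T₀ ℓ))) := by
        rw [hupds]; exact hL
      exact h1.comp_hasDerivAt (T₀ ℓ) hcc
    -- τ and ν slices
    have hcurve2 : HasDerivAt
        (fun s => ((p0, q0, Function.update T₀ ℓ s) : ℝ × ℝ × (Fin d → ℝ)))
        (((0 : ℝ), (0 : ℝ), e)) (T₀ ℓ) :=
      (hasDerivAt_const _ p0).prodMk ((hasDerivAt_const _ q0).prodMk hg)
    have hD2sl : DifferentiableAt ℝ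
        (fun s => D2 (p0, q0, Function.update T₀ ℓ s)) (T₀ ℓ) := by
      have h1 : HasFDerivAt D2 (fderiv ℝ D2 (p0, q0, T₀))
          ((p0, q0, Function.update T₀ ℓ (T₀ ℓ))) := by
        rw [hupds]; exact (hD2diff _).hasFDerivAt
      exact (h1.comp_hasDerivAt (T₀ ℓ) hcurve2).differentiableAt
    have hD1sl : DifferentiableAt ℝ
        (fun s => D1 (p0, q0, Function.update T₀ ℓ s)) (T₀ ℓ) := by
      have h1 : HasFDerivAt D1 (fderiv ℝ D1 (p0, q0, T₀))
          ((p0, q0, Function.update T₀ ℓ (T₀ ℓ))) := by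
        rw [hupds]; exact (hD1diff _).hasFDerivAt
      exact (h1.comp_hasDerivAt (T₀ ℓ) hcurve2).differentiableAt
    have hτfun : (fun s => τf p0 q0 (Function.update T₀ ℓ s))
        = fun s => (1 / p0) * D2 (p0, q0, Function.update T₀ ℓ s) := by
      funext s; exact hτ'eq _ _ _
    have hνfun : (fun s => ν p0 q0 (Function.update T₀ ℓ s))
        = fun s => (1 / q0) * D1 (p0, q0, Function.update T₀ ℓ s) := by
      funext s; exact hν'eq _ _ _
    have hτdiffAt : DifferentiableAt ℝ
        (fun s => τf p0 q0 (Function.update T₀ ℓ s)) (T₀ ℓ) := by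
      rw [hτfun]; exact hD2sl.const_mul _
    have hνdiffAt : DifferentiableAt ℝ
        (fun s => ν p0 q0 (Function.update T₀ ℓ s)) (T₀ ℓ) := by
      rw [hνfun]; exact hD1sl.const_mul _
    have hτsl : HasDerivAt (fun s => τf p0 q0 (Function.update T₀ ℓ s))
        (τvec ℓ) (T₀ ℓ) := by
      rw [hτvec ℓ]; exact hτdiffAt.hasDerivAt
    have hνsl : HasDerivAt (fun s => ν p0 q0 (Function.update T₀ ℓ s))
        (νvec ℓ) (T₀ ℓ) := by
      rw [hνvec ℓ]; exact hνdiffAt.hasDerivAt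
    -- direct derivative of the slice of H
    have hσfun : (fun s => H (q0, Function.update T₀ ℓ s))
        = fun s => (1 - τf p0 q0 (Function.update T₀ ℓ s)
            - (1 - ν p0 q0 (Function.update T₀ ℓ s)) * η0 * θ0) * p0 - mc q0 := by
      funext s
      rw [hHτν q0 (Function.update T₀ ℓ s), ← hη0, ← hθ0, ← hp0]
    have hσdirect : HasDerivAt (fun s => H (q0, Function.update T₀ ℓ s))
        ((0 - τvec ℓ - (0 - νvec ℓ) * η0 * θ0) * p0) (T₀ ℓ) := by
      rw [hσfun]
      exact ((((hasDerivAt_const _ (1 : ℝ)).sub hτsl).sub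
        ((((hasDerivAt_const _ (1 : ℝ)).sub hνsl).mul_const η0).mul_const θ0)).mul_const
          p0).sub_const (mc q0)
    have hL0e : L ((0 : ℝ), e) = (0 - τvec ℓ - (0 - νvec ℓ) * η0 * θ0) * p0 :=
      hσL.unique hσdirect
    -- G * Dl = p0 * Aℓ
    have hGD : G * Dl = p0 * (τvec ℓ - νvec ℓ * η0 * θ0) := by
      have := hsplit
      rw [hLDe, hL0e] at this
      linear_combination -this
    -- ρvec ℓ = p' q0 * Dl
    have hρ : ρvec ℓ = p' q0 * Dl := by
      have h1 : HasDerivAt p (p' q0) (qs (Function.update T₀ ℓ (T₀ ℓ))) := by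
        rw [hupds, ← hq0]; exact hp q0
      have h2 : HasDerivAt (fun s => p (qs (Function.update T₀ ℓ s)))
          (p' q0 * Dl) (T₀ ℓ) := h1.comp (T₀ ℓ) hqsg
      rw [hρvec ℓ, h2.deriv]
    calc G * ρvec ℓ = p' q0 * (G * Dl) := by rw [hρ]; ring
      _ = p' q0 * (p0 * (τvec ℓ - νvec ℓ * η0 * θ0)) := by rw [hGD]
  -- conclude
  have main : ∀ ℓ ℓ' : Fin d,
      ρvec ℓ * (τvec ℓ' - νvec ℓ' * η0 * θ0)
        = ρvec ℓ' * (τvec ℓ - νvec ℓ * η0 * θ0) := by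
    intro ℓ ℓ'
    by_cases hG : G = 0
    · have hzero : ∀ j : Fin d, τvec j - νvec j * η0 * θ0 = 0 := by
        intro j
        have h1 := key j
        rw [hG, zero_mul] at h1
        have h2 := h1.symm
        rcases mul_eq_zero.mp h2 with h | h
        · exact absurd h hp'ne
        · rcases mul_eq_zero.mp h with h' | h'
          · exact absurd h' hp0ne
          · exact h'
      rw [hzero ℓ, hzero ℓ', mul_zero, mul_zero]
    · apply mul_left_cancel₀ hG
      calc G * (ρvec ℓ * (τvec ℓ' - νvec ℓ' * η0 * θ0))
          = (G * ρvec ℓ) * (τvec ℓ' - νvec ℓ' * η0 * θ0) := by ring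
        _ = (p' q0 * (p0 * (τvec ℓ - νvec ℓ * η0 * θ0)))
              * (τvec ℓ' - νvec ℓ' * η0 * θ0) := by rw [key ℓ]
        _ = (p' q0 * (p0 * (τvec ℓ' - νvec ℓ' * η0 * θ0)))
              * (τvec ℓ - νvec ℓ * η0 * θ0) := by ring
        _ = (G * ρvec ℓ') * (τvec ℓ - νvec ℓ * η0 * θ0) := by rw [key ℓ']
        _ = G * (ρvec ℓ' * (τvec ℓ - νvec ℓ * η0 * θ0)) := by ring
  refine ⟨main, ?_⟩
  intro ℓ ℓ' hf hf'
  rw [div_mul_cancel₀ _ hf, div_mul_cancel₀ _ hf']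
  exact main ℓ ℓ'
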